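/- arXiv:2212.06248 — 8 statements merged into one kernel-verified Lean document; each statement's English description precedes it below -/
import Mathlib

section
/- If Λ ⊆ ℤⁿ is a cubiquitous sublattice of finite index, then the index [ℤⁿ : Λ] is at most 2ⁿ. -/
/-- A sublattice `Λ ⊆ ℤⁿ` is *cubiquitous* if every unit cube `x + {0,1}ⁿ`, `x ∈ ℤⁿ`,
contains a point of `Λ`. -/
def Cubiquitous {n : ℕ} (S : Set (Fin n → ℤ)) : Prop :=
  ∀ x : Fin n → ℤ, ∃ c ∈ S, ∀ i, c i = x i ∨ c i = x i + 1

/-- If `Λ ⊆ ℤⁿ` is a cubiquitous sublattice of finite index, then `[ℤⁿ : Λ] ≤ 2ⁿ`. -/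
theorem index_le_of_cubiquitous {n : ℕ} (Λ : AddSubgroup (Fin n → ℤ))
    (hfin : Λ.index ≠ 0) (hcub : Cubiquitous (Λ : Set (Fin n → ℤ))) :
    Λ.index ≤ 2 ^ n := by
  have hsurj : Function.Surjective
      (fun ε : Fin n → Fin 2 =>
        (QuotientAddGroup.mk (fun i => -(ε i : ℤ)) : (Fin n → ℤ) ⧸ Λ)) := by
    intro q
    induction q using QuotientAddGroup.induction_on with
    | H x =>
      obtain ⟨c, hc, h⟩ := hcub x
      refine ⟨fun i => if c i = x i then 0 else 1, ?_⟩
      apply (QuotientAddGroup.eq (s := Λ)).2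
      convert (show c ∈ Λ from hc) using 1
      funext i
      rcases h i with h' | h' <;> simp [h'] <;> omega
  calc Λ.index = Nat.card ((Fin n → ℤ) ⧸ Λ) := rfl
    _ ≤ Nat.card (Fin n → Fin 2) := Nat.card_le_card_of_surjective _ hsurj
    _ = 2 ^ n := by simp
end

section
/- If H is an n×n lower triangular integer matrix with all diagonal entries equal to 2 and all below-diagonal entries in {0,1} (a Hajós matrix), then the lattice Λ_H ⊆ ℤⁿ generated by the columns of H is cubiquitous and has index 2ⁿ in ℤⁿ; i.e., every unit cube x + {0,1}ⁿ with x ∈ ℤⁿ contains exactly one point of Λ_H. -/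
/-- A *Hajós matrix* is a lower triangular integer matrix with 2's on the diagonal and
below-diagonal entries in `{0,1}`. -/
def IsHajosMatrix {n : ℕ} (H : Matrix (Fin n) (Fin n) ℤ) : Prop :=
  (∀ i, H i i = 2) ∧ (∀ i j, i < j → H i j = 0) ∧ (∀ i j, j < i → H i j = 0 ∨ H i j = 1)

/-- `Λ_H`: the sublattice of `ℤⁿ` generated by the columns of `H`. -/
def hajosLattice {n : ℕ} (H : Matrix (Fin n) (Fin n) ℤ) : AddSubgroup (Fin n → ℤ) :=
  AddSubgroup.closure (Set.range fun j => fun i => H i j)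

lemma mem_hajosLattice_iff {n : ℕ} (H : Matrix (Fin n) (Fin n) ℤ) (c : Fin n → ℤ) :
    c ∈ hajosLattice H ↔ ∃ a : Fin n → ℤ, H.mulVec a = c := by
  constructor
  · intro hc
    induction hc using AddSubgroup.closure_induction with
    | mem v hv =>
      obtain ⟨j, rfl⟩ := hv
      exact ⟨Pi.single j 1, by simp [Matrix.mulVec_single]; rfl⟩
    | zero => exact ⟨0, by simp⟩
    | add u v _ _ hu hv =>
      obtain ⟨a, rfl⟩ := hu; obtain ⟨b, rfl⟩ := hv
      exact ⟨a + b, by rw [Matrix.mulVec_add]⟩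
    | neg u _ hu =>
      obtain ⟨a, rfl⟩ := hu
      exact ⟨-a, by rw [Matrix.mulVec_neg]⟩
  · rintro ⟨a, rfl⟩
    have : H.mulVec a = ∑ j, a j • (fun i => H i j) := by
      funext i
      simp [Matrix.mulVec, dotProduct, Finset.sum_apply, mul_comm]
    rw [this]
    exact AddSubgroup.sum_mem _ fun j _ =>
      AddSubgroup.zsmul_mem _ (AddSubgroup.subset_closure (Set.mem_range_self j)) _

/-- Greedy coefficients for the unique lattice point in the cube `x + {0,1}ⁿ`. -/
def hcoef {n : ℕ} (H : Matrix (Fin n) (Fin n) ℤ) (x : Fin n → ℤ) : ℕ → ℤ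
  | j =>
    if hj : j < n then
      let t := x ⟨j, hj⟩ - ∑ k ∈ (Finset.range j).attach,
        H ⟨j, hj⟩ ⟨k.1, lt_trans (Finset.mem_range.mp k.2) hj⟩ * hcoef H x k.1
      (t + t % 2) / 2
    else 0
termination_by j => j
decreasing_by exact Finset.mem_range.mp k.2

/-- Decomposition of `H *ᵥ a` at a coordinate, for lower triangular `H` with diagonal `2`. -/
lemma hajos_decomp {n : ℕ} (H : Matrix (Fin n) (Fin n) ℤ)
    (hdiag : ∀ i, H i i = 2) (hupper : ∀ i j, i < j → H i j = 0)
    (a : Fin n → ℤ) (j : Fin n) :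
    H.mulVec a j = (∑ k ∈ (Finset.range j.1).attach,
        H j ⟨k.1, lt_trans (Finset.mem_range.mp k.2) j.2⟩ * a ⟨k.1, lt_trans (Finset.mem_range.mp k.2) j.2⟩)
      + 2 * a j := by
  classical
  set F : ℕ → ℤ := fun k => if h : k < n then H j ⟨k, h⟩ * a ⟨k, h⟩ else 0 with hF
  have h1 : H.mulVec a j = ∑ k ∈ Finset.range n, F k := by
    rw [← Fin.sum_univ_eq_sum_range F n]
    simp only [Matrix.mulVec, dotProduct, hF]
    refine Finset.sum_congr rfl fun k _ => ?_
    rw [dif_pos k.2]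
  have h2 : ∑ k ∈ Finset.range n, F k = ∑ k ∈ Finset.range (j.1 + 1), F k := by
    refine (Finset.sum_subset (by simp [Finset.range_subset]; omega) fun k hk hk' => ?_).symm
    simp only [Finset.mem_range] at hk hk'
    have hkn : k < n := hk
    simp only [hF, dif_pos hkn]
    rw [hupper j ⟨k, hkn⟩ (by simp only [Fin.lt_def]; omega), zero_mul]
  have h3 : F j.1 = 2 * a j := by
    simp only [hF, dif_pos j.2]
    rw [show (⟨j.1, j.2⟩ : Fin n) = j from rfl, hdiag]
  have h4 : ∑ k ∈ (Finset.range j.1).attach,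
      H j ⟨k.1, lt_trans (Finset.mem_range.mp k.2) j.2⟩ * a ⟨k.1, lt_trans (Finset.mem_range.mp k.2) j.2⟩
      = ∑ k ∈ Finset.range j.1, F k := by
    rw [← Finset.sum_attach (Finset.range j.1) F]
    refine Finset.sum_congr rfl fun k _ => ?_
    have hk : (k.1 : ℕ) < n := lt_trans (Finset.mem_range.mp k.2) j.2
    simp [hF, hk]
  rw [h1, h2, Finset.sum_range_succ, h3, h4]

lemma hajos_exists {n : ℕ} (H : Matrix (Fin n) (Fin n) ℤ)
    (hdiag : ∀ i, H i i = 2) (hupper : ∀ i j, i < j → H i j = 0)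
    (x : Fin n → ℤ) (j : Fin n) :
    H.mulVec (fun i => hcoef H x i.1) j = x j ∨
      H.mulVec (fun i => hcoef H x i.1) j = x j + 1 := by
  rw [hajos_decomp H hdiag hupper _ j]
  set S : ℤ := ∑ k ∈ (Finset.range j.1).attach,
      H j ⟨k.1, lt_trans (Finset.mem_range.mp k.2) j.2⟩ * hcoef H x k.1 with hS
  have hunfold : hcoef H x j.1 = ((x j - S) + (x j - S) % 2) / 2 := by
    rw [hcoef, dif_pos j.2]
  rw [hunfold]
  omega

lemma hajos_uniq {n : ℕ} (H : Matrix (Fin n) (Fin n) ℤ)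
    (hdiag : ∀ i, H i i = 2) (hupper : ∀ i j, i < j → H i j = 0)
    (x : Fin n → ℤ) (a b : Fin n → ℤ)
    (ha : ∀ i, H.mulVec a i = x i ∨ H.mulVec a i = x i + 1)
    (hb : ∀ i, H.mulVec b i = x i ∨ H.mulVec b i = x i + 1) : a = b := by
  have key : ∀ m : ℕ, ∀ hm : m < n, a ⟨m, hm⟩ = b ⟨m, hm⟩ := by
    intro m
    induction m using Nat.strong_induction_on with
    | _ m IH =>
      intro hm
      have hda := hajos_decomp H hdiag hupper a ⟨m, hm⟩
      have hdb := hajos_decomp H hdiag hupper b ⟨m, hm⟩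
      have hsum : ∑ k ∈ (Finset.range m).attach,
          H ⟨m, hm⟩ ⟨k.1, lt_trans (Finset.mem_range.mp k.2) hm⟩ * a ⟨k.1, lt_trans (Finset.mem_range.mp k.2) hm⟩
          = ∑ k ∈ (Finset.range m).attach,
          H ⟨m, hm⟩ ⟨k.1, lt_trans (Finset.mem_range.mp k.2) hm⟩ * b ⟨k.1, lt_trans (Finset.mem_range.mp k.2) hm⟩ := by
        refine Finset.sum_congr rfl fun k _ => ?_
        rw [IH k.1 (Finset.mem_range.mp k.2) (lt_trans (Finset.mem_range.mp k.2) hm)]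
      have e1 : H.mulVec a ⟨m, hm⟩ - H.mulVec b ⟨m, hm⟩
          = 2 * (a ⟨m, hm⟩ - b ⟨m, hm⟩) := by
        rw [hda, hdb, hsum]; ring
      rcases ha ⟨m, hm⟩ with h1 | h1 <;> rcases hb ⟨m, hm⟩ with h2 | h2 <;> omega
  funext i
  have := key i.1 i.2
  simpa using this

/-- If `H` is a Hajós matrix, then `Λ_H` meets every unit cube `x + {0,1}ⁿ` in exactly one
point (so it is cubiquitous, a 2-cube tiling lattice), and it has index `2ⁿ` in `ℤⁿ`. -/
theorem hajosLattice_two_cube_tiling {n : ℕ} (H : Matrix (Fin n) (Fin n) ℤ)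
    (hH : IsHajosMatrix H) :
    (∀ x : Fin n → ℤ, ∃! c : Fin n → ℤ,
        c ∈ hajosLattice H ∧ ∀ i, c i = x i ∨ c i = x i + 1) ∧
    (hajosLattice H).index = 2 ^ n := by
  obtain ⟨hdiag, hupper, _⟩ := hH
  have part1 : ∀ x : Fin n → ℤ, ∃! c : Fin n → ℤ,
      c ∈ hajosLattice H ∧ ∀ i, c i = x i ∨ c i = x i + 1 := by
    intro x
    refine ⟨H.mulVec (fun i => hcoef H x i.1),
      ⟨(mem_hajosLattice_iff H _).mpr ⟨_, rfl⟩, hajos_exists H hdiag hupper x⟩, ?_⟩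
    rintro c ⟨hc, hcube⟩
    obtain ⟨b, rfl⟩ := (mem_hajosLattice_iff H c).mp hc
    rw [hajos_uniq H hdiag hupper x b (fun i => hcoef H x i.1) hcube
      (hajos_exists H hdiag hupper x)]
  refine ⟨part1, ?_⟩
  have hbij : Function.Bijective
      (fun b : Fin n → Fin 2 => (QuotientAddGroup.mk (fun i => ((b i : ℕ) : ℤ)) :
        (Fin n → ℤ) ⧸ hajosLattice H)) := by
    constructor
    · intro b b' hbb'
      rw [QuotientAddGroup.eq] at hbb'
      -- c := b' - b ∈ Λ  (as integer vectors)
      set c : Fin n → ℤ := fun i => ((b' i : ℕ) : ℤ) - ((b i : ℕ) : ℤ) with hc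
      have hcmem : c ∈ hajosLattice H := by
        convert hbb' using 1
        funext i
        simp [hc, sub_eq_neg_add]
      obtain ⟨_, _, huniq⟩ := part1 (fun i => ((b' i : ℕ) : ℤ) - 1)
      have hcube_c : ∀ i, c i = ((b' i : ℕ) : ℤ) - 1 ∨ c i = ((b' i : ℕ) : ℤ) - 1 + 1 := by
        intro i
        have h1 : (b i : ℕ) < 2 := (b i).2
        have h2 : (b' i : ℕ) < 2 := (b' i).2
        simp only [hc]
        omega
      have hcube_0 : ∀ i, (0 : Fin n → ℤ) i = ((b' i : ℕ) : ℤ) - 1 ∨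
          (0 : Fin n → ℤ) i = ((b' i : ℕ) : ℤ) - 1 + 1 := by
        intro i
        have h2 : (b' i : ℕ) < 2 := (b' i).2
        simp only [Pi.zero_apply]
        omega
      have hc0 : c = 0 := by
        rw [huniq c ⟨hcmem, hcube_c⟩, huniq 0 ⟨(hajosLattice H).zero_mem, hcube_0⟩]
      funext i
      have : c i = 0 := by rw [hc0]; rfl
      simp only [hc] at this
      have h1 : (b i : ℕ) < 2 := (b i).2
      have h2 : (b' i : ℕ) < 2 := (b' i).2
      exact Fin.ext (by omega)
    · intro q
      obtain ⟨y, rfl⟩ := QuotientAddGroup.mk_surjective q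
      obtain ⟨c, ⟨hc, hcube⟩, -⟩ := part1 (fun i => y i - 1)
      refine ⟨fun i => if y i = c i then 0 else 1, ?_⟩
      have hco : ∀ i, (((if y i = c i then (0 : Fin 2) else 1) : Fin 2) : ℤ) = y i - c i := by
        intro i
        rcases hcube i with h | h
        · rw [if_neg (by omega)]; simp; omega
        · rw [if_pos (by omega)]; simp; omega
      rw [QuotientAddGroup.eq]
      convert hc using 1
      funext i
      simp only [Pi.add_apply, Pi.neg_apply]
      rw [hco i]
      ring
  have : (hajosLattice H).index = Nat.card ((Fin n → ℤ) ⧸ hajosLattice H) := rfl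
  rw [this, ← Nat.card_eq_of_bijective _ hbij]
  simp [Nat.card_eq_fintype_card]
end

section
/- Let H be an n×n Hajós matrix. Then the only Hajós vectors contained in the lattice Λ_H are the columns of H. Consequently, if H and H' are Hajós matrices of rank n, then Λ_H = Λ_{H'} if and only if H = H'. -/
/-- A *Hajós vector*: its first nonzero entry equals 2 and all later entries are in `{0,1}`. -/
def IsHajosVector {n : ℕ} (v : Fin n → ℤ) : Prop :=
  ∃ k : Fin n, v k = 2 ∧ (∀ j, j < k → v j = 0) ∧ ∀ j, k < j → v j = 0 ∨ v j = 1

lemma hajos_key {n : ℕ} (H : Matrix (Fin n) (Fin n) ℤ) (hH : IsHajosMatrix H)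
    (v : Fin n → ℤ) (hv : v ∈ hajosLattice H) (hvec : IsHajosVector v) :
    ∃ j : Fin n, v = fun i => H i j := by
  obtain ⟨hd, hu, hl⟩ := hH
  obtain ⟨k, hk2, hk0, hk01⟩ := hvec
  have hv' : v ∈ Submodule.span ℤ (Set.range fun j => fun i => H i j) := by
    rw [← Submodule.mem_toAddSubgroup, Submodule.span_int_eq_addSubgroupClosure]
    exact hv
  rw [Submodule.mem_span_range_iff_exists_fun] at hv'
  obtain ⟨c, hc⟩ := hv'
  have hvi : ∀ i, v i = ∑ m, c m * H i m := by
    intro i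
    rw [← hc]
    simp [Finset.sum_apply, mul_comm]
  have czN : ∀ N : ℕ, ∀ j : Fin n, j.val = N → j ≠ k → c j = 0 := by
    intro N
    induction N using Nat.strong_induction_on with
    | _ N ihN =>
      intro j hjN hj
      have ih : ∀ m : Fin n, m < j → m ≠ k → c m = 0 := fun m hm =>
        ihN m.1 (hjN ▸ Fin.lt_def.mp hm) m rfl
      rcases lt_or_gt_of_ne hj with hjk | hjk
      · -- j < k
        have h0 : v j = 0 := hk0 j hjk
        rw [hvi j] at h0
        have hs : ∑ m, c m * H j m = c j * H j j := by
          apply Finset.sum_eq_single j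
          · intro m _ hm
            rcases lt_or_gt_of_ne hm with h | h
            · rw [ih m h (ne_of_lt (h.trans hjk))]; ring
            · rw [hu j m h]; ring
          · simp
        rw [hs, hd j] at h0
        omega
      · -- k < j
        have hck : c k = 1 := by
          have h2 := hvi k
          have hs : ∑ m, c m * H k m = c k * H k k := by
            apply Finset.sum_eq_single k
            · intro m _ hm
              rcases lt_or_gt_of_ne hm with h | h
              · rw [ih m (h.trans hjk) hm]; ring
              · rw [hu k m h]; ring
            · simp
          rw [hk2, hs, hd k] at h2
          omega
        have h01 := hk01 j hjk
        have hs : ∑ m, c m * H j m = c k * H j k + c j * H j j := by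
          rw [show (c k * H j k + c j * H j j) = ∑ m ∈ ({k, j} : Finset (Fin n)), c m * H j m
            from (Finset.sum_pair (f := fun m => c m * H j m) (ne_of_lt hjk : k ≠ j)).symm]
          refine (Finset.sum_subset (Finset.subset_univ _) ?_).symm
          intro m _ hm
          simp only [Finset.mem_insert, Finset.mem_singleton, not_or] at hm
          rcases lt_or_gt_of_ne hm.2 with h | h
          · rw [ih m h hm.1]; ring
          · rw [hu j m h]; ring
        have hjv := hvi j
        rw [hs, hck, hd j] at hjv
        have hjk01 := hl j k hjk
        omega
  have cz : ∀ j : Fin n, j ≠ k → c j = 0 := fun j => czN j.1 j rfl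
  refine ⟨k, funext fun i => ?_⟩
  have hck : c k = 1 := by
    have h2 := hvi k
    have hs : ∑ m, c m * H k m = c k * H k k := by
      apply Finset.sum_eq_single k
      · intro m _ hm
        rw [cz m hm]; ring
      · simp
    rw [hk2, hs, hd k] at h2
    omega
  rw [hvi i]
  have hs : ∑ m, c m * H i m = c k * H i k := by
    apply Finset.sum_eq_single k
    · intro m _ hm
      rw [cz m hm]; ring
    · simp
  rw [hs, hck, one_mul]

/-- The only Hajós vectors in `Λ_H` are the columns of `H`; consequently, for Hajós matrices
`H, H'` of rank `n`, `Λ_H = Λ_{H'}` if and only if `H = H'`. -/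
theorem hajosVectors_eq_columns {n : ℕ} (H H' : Matrix (Fin n) (Fin n) ℤ)
    (hH : IsHajosMatrix H) (hH' : IsHajosMatrix H') :
    (∀ v : Fin n → ℤ, v ∈ hajosLattice H → IsHajosVector v →
        ∃ j : Fin n, v = fun i => H i j) ∧
    (hajosLattice H = hajosLattice H' ↔ H = H') := by
  refine ⟨fun v hv hvec => hajos_key H hH v hv hvec, ?_, fun h => by rw [h]⟩
  intro heq
  ext i j
  have hcol : (fun i => H' i j) ∈ hajosLattice H := by
    rw [heq]
    exact AddSubgroup.subset_closure ⟨j, rfl⟩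
  have hvec : IsHajosVector (fun i => H' i j) :=
    ⟨j, hH'.1 j, fun m hm => hH'.2.1 m j hm, fun m hm => hH'.2.2 m j hm⟩
  obtain ⟨m, hm⟩ := hajos_key H hH _ hcol hvec
  have hmj : m = j := by
    have h1 : H' j j = H j m := congrFun hm j
    rw [hH'.1 j] at h1
    by_contra hne
    rcases lt_or_gt_of_ne hne with h | h
    · rcases hH.2.2 j m h with h2 | h2 <;> omega
    · have h2 := hH.2.1 j m h; omega
  have := congrFun hm i
  rw [hmj] at this
  exact this.symm
end

section
/- Let Λ ⊆ ℤⁿ be a 2-cube tiling lattice given as Λ_H for a Hajós matrix H, and let y ∈ Λ with y · y = 4. Then ±y = 2e_i for some standard basis vector e_i, and y or −y is a column of H. -/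
/-- Let `Λ = Λ_H ⊆ ℤⁿ` be a 2-cube tiling lattice given by a Hajós matrix `H`, and let `y ∈ Λ`
with `y · y = 4`.  Then `±y = 2eᵢ` for some standard basis vector `eᵢ`, and `y` or `-y` is a
column of `H`. -/
theorem square_four_is_hajos_column {n : ℕ} (H : Matrix (Fin n) (Fin n) ℤ)
    (hH : IsHajosMatrix H) (y : Fin n → ℤ) (hy : y ∈ hajosLattice H)
    (hsq : ∑ i, y i * y i = 4) :
    (∃ i : Fin n, y = Pi.single i (2 : ℤ) ∨ y = Pi.single i (-2 : ℤ)) ∧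
    (∃ j : Fin n, (fun i => H i j) = y ∨ (fun i => H i j) = -y) := by
  obtain ⟨hdiag, hupper, hlow⟩ := hH
  -- extract integer coefficients
  have hy' : y ∈ Submodule.span ℤ (Set.range fun j => fun i => H i j) :=
    (AddSubgroup.closure_le
      (K := (Submodule.span ℤ (Set.range fun j => fun i => H i j)).toAddSubgroup)).mpr
      Submodule.subset_span hy
  obtain ⟨c, hcy⟩ := (Submodule.mem_span_range_iff_exists_fun ℤ).mp hy'
  have hyc : ∀ i, y i = ∑ j, c j * H i j := by
    intro i
    rw [← hcy]
    simp [Finset.sum_apply]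
  -- y is nonzero
  have hy0 : ∃ i, y i ≠ 0 := by
    by_contra h
    push_neg at h
    simp [h] at hsq
  -- the minimal index where y is nonzero
  set S : Finset (Fin n) := Finset.univ.filter (fun i => y i ≠ 0) with hS
  have hne : S.Nonempty := by
    obtain ⟨i, hi⟩ := hy0
    exact ⟨i, by simp [hS, hi]⟩
  set i₀ : Fin n := S.min' hne with hi₀def
  have hyi₀ : y i₀ ≠ 0 := by
    have := S.min'_mem hne
    simpa [hS] using this
  have hmin : ∀ k, k < i₀ → y k = 0 := by
    intro k hk
    by_contra h
    have : i₀ ≤ k := S.min'_le k (by simp [hS, h])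
    exact absurd hk (not_lt.mpr this)
  -- coefficients below i₀ vanish
  have hc0 : ∀ m : ℕ, ∀ k : Fin n, k.val = m → k < i₀ → c k = 0 := by
    intro m
    induction m using Nat.strong_induction_on with
    | _ m ih =>
      intro k hk hki
      have hyk : y k = 0 := hmin k hki
      have hsum : ∑ j, c j * H k j = c k * H k k := by
        refine Finset.sum_eq_single k (fun j _ hj => ?_) (fun h => absurd (Finset.mem_univ k) h)
        rcases lt_or_gt_of_ne hj with hlt | hgt
        · have : c j = 0 := ih j.val (hk ▸ hlt) j rfl (lt_trans hlt hki)
          simp [this]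
        · simp [hupper k j hgt]
      rw [hyc k, hsum, hdiag k] at hyk
      omega
  -- y i₀ = 2 * c i₀
  have hi0 : y i₀ = c i₀ * 2 := by
    have hsum : ∑ j, c j * H i₀ j = c i₀ * H i₀ i₀ := by
      refine Finset.sum_eq_single i₀ (fun j _ hj => ?_) (fun h => absurd (Finset.mem_univ i₀) h)
      rcases lt_or_gt_of_ne hj with hlt | hgt
      · simp [hc0 j.val j rfl hlt]
      · simp [hupper i₀ j hgt]
    rw [hyc i₀, hsum, hdiag i₀]
  have hci₀ : c i₀ ≠ 0 := by
    intro h; rw [h] at hi0; simp at hi0; exact hyi₀ hi0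
  -- decompose the square sum
  have h4 : ∑ i ∈ Finset.univ.erase i₀, y i * y i + y i₀ * y i₀ = 4 := by
    rw [Finset.sum_erase_add _ _ (Finset.mem_univ i₀)]; exact hsq
  have hrest_nonneg : 0 ≤ ∑ i ∈ Finset.univ.erase i₀, y i * y i :=
    Finset.sum_nonneg fun i _ => mul_self_nonneg (y i)
  have habs : 1 ≤ |c i₀| := Int.one_le_abs hci₀
  have hcsq : 1 ≤ c i₀ * c i₀ := by nlinarith [abs_mul_abs_self (c i₀)]
  have hsq4 : y i₀ * y i₀ = 4 * (c i₀ * c i₀) := by rw [hi0]; ring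
  have hcc : c i₀ * c i₀ = 1 := by nlinarith [hsq4, h4, hrest_nonneg, hcsq]
  have hc1 : c i₀ = 1 ∨ c i₀ = -1 := mul_self_eq_one_iff.mp hcc
  have hy2 : y i₀ = 2 ∨ y i₀ = -2 := by rcases hc1 with h | h <;> rw [hi0, h] <;> norm_num
  have hysq : y i₀ * y i₀ = 4 := by rcases hy2 with h | h <;> rw [h] <;> norm_num
  have hrest : ∑ i ∈ Finset.univ.erase i₀, y i * y i = 0 := by omega
  have hzero : ∀ i, i ≠ i₀ → y i = 0 := by
    intro i hi
    have := (Finset.sum_eq_zero_iff_of_nonneg fun j _ => mul_self_nonneg (y j)).mp hrest i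
      (Finset.mem_erase.mpr ⟨hi, Finset.mem_univ i⟩)
    exact mul_self_eq_zero.mp this
  -- coefficients above i₀ vanish, and the column of H below the diagonal at i₀ vanishes
  have hcol : ∀ m : ℕ, ∀ k : Fin n, k.val = m → i₀ < k → c k = 0 ∧ H k i₀ = 0 := by
    intro m
    induction m using Nat.strong_induction_on with
    | _ m ih =>
      intro k hk hik
      have hyk : y k = 0 := hzero k (by intro h; rw [h] at hik; exact lt_irrefl _ hik)
      have hne' : i₀ ≠ k := ne_of_lt hik
      have hsum : ∑ j, c j * H k j = c i₀ * H k i₀ + c k * H k k := by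
        rw [show (c i₀ * H k i₀ + c k * H k k : ℤ)
            = ∑ j ∈ ({i₀, k} : Finset (Fin n)), c j * H k j by rw [Finset.sum_pair hne']]
        refine (Finset.sum_subset (Finset.subset_univ _) fun j _ hj => ?_).symm
        simp only [Finset.mem_insert, Finset.mem_singleton, not_or] at hj
        obtain ⟨hj1, hj2⟩ := hj
        rcases lt_trichotomy j i₀ with hlt | heq | hgt
        · simp [hc0 j.val j rfl hlt]
        · exact absurd heq hj1
        · rcases lt_or_gt_of_ne hj2 with hjk | hjk
          · simp [(ih j.val (hk ▸ hjk) j rfl hgt).1]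
          · simp [hupper k j hjk]
      have heq : (0 : ℤ) = c i₀ * H k i₀ + c k * 2 := by
        rw [← hyk, hyc k, hsum, hdiag k]
      have hH01 : H k i₀ = 0 ∨ H k i₀ = 1 := hlow k i₀ hik
      rcases hc1 with h | h <;> rw [h] at heq <;> constructor <;> omega
  -- conclusions
  have hysingle : y = Pi.single i₀ (y i₀) := by
    funext i
    rcases eq_or_ne i i₀ with rfl | h
    · simp
    · simp [Pi.single_apply, h, hzero i h]
  constructor
  · refine ⟨i₀, ?_⟩
    rcases hy2 with h | h
    · left; rw [hysingle, h]
    · right; rw [hysingle, h]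
  · refine ⟨i₀, ?_⟩
    have hcolval : ∀ k, H k i₀ = if k = i₀ then 2 else 0 := by
      intro k
      rcases lt_trichotomy k i₀ with hlt | heq | hgt
      · rw [if_neg (ne_of_lt hlt)]; exact hupper k i₀ hlt
      · rw [heq, if_pos rfl]; exact hdiag i₀
      · rw [if_neg (ne_of_gt hgt)]; exact (hcol k.val k rfl hgt).2
    have hyval : ∀ k, y k = if k = i₀ then y i₀ else 0 := by
      intro k
      by_cases hk : k = i₀
      · rw [if_pos hk, hk]
      · rw [if_neg hk]; exact hzero k hk
    rcases hy2 with h | h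
    · left
      funext k
      rw [hcolval k, hyval k, h]
    · right
      funext k
      rw [Pi.neg_apply, hcolval k, hyval k, h]
      by_cases hk : k = i₀ <;> simp [hk]
end

section
/- Every column of a Hajós matrix H is an irreducible element of the lattice Λ_H: it cannot be written as x + y with x, y nonzero elements of Λ_H satisfying x · y ≥ 0. -/
private lemma hajos_mem_iff {n : ℕ} (H : Matrix (Fin n) (Fin n) ℤ) {z : Fin n → ℤ}
    (hz : z ∈ hajosLattice H) : ∃ a : Fin n → ℤ, ∀ i, z i = ∑ k, H i k * a k := by
  rw [hajosLattice, ← Submodule.span_int_eq_addSubgroupClosure,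
    Submodule.mem_toAddSubgroup, Submodule.mem_span_range_iff_exists_fun] at hz
  obtain ⟨a, ha⟩ := hz
  refine ⟨a, fun i => ?_⟩
  rw [← ha]
  simp [Finset.sum_apply, mul_comm]

private lemma int_key {u s : ℤ} (hs : s = 0 ∨ s = 1) (ht : u ≠ 0) :
    2 * u * (s - 2 * u) ≤ -2 := by
  rcases lt_or_gt_of_ne ht with h | h
  · have : u ≤ -1 := by omega
    rcases hs with rfl | rfl <;> nlinarith
  · have : 1 ≤ u := by omega
    rcases hs with rfl | rfl <;> nlinarith

/-- Every column of a Hajós matrix `H` is an irreducible element of `Λ_H`: it cannot be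
written as `x + y` with `x, y` nonzero elements of `Λ_H` and `x · y ≥ 0`. -/
theorem hajos_column_irreducible {n : ℕ} (H : Matrix (Fin n) (Fin n) ℤ)
    (hH : IsHajosMatrix H) (j : Fin n) :
    ¬ ∃ x y : Fin n → ℤ, x ∈ hajosLattice H ∧ y ∈ hajosLattice H ∧ x ≠ 0 ∧ y ≠ 0 ∧
        x + y = (fun i => H i j) ∧ 0 ≤ ∑ i, x i * y i := by
  obtain ⟨hdiag, hupper, hlow⟩ := hH
  rintro ⟨x, y, hx, hy, hx0, hy0, hsum, hdot⟩
  obtain ⟨a, ha⟩ := hajos_mem_iff H hx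
  obtain ⟨b, hb⟩ := hajos_mem_iff H hy
  -- x i + y i = H i j
  have hxy : ∀ i, x i + y i = H i j := fun i => congrFun hsum i
  -- a ≠ 0
  have ha0 : a ≠ 0 := by
    rintro rfl
    exact hx0 (funext fun i => by simpa using ha i)
  have hb0 : b ≠ 0 := by
    rintro rfl
    exact hy0 (funext fun i => by simpa using hb i)
  -- minimal support elements
  have hane : (Finset.univ.filter fun i => a i ≠ 0).Nonempty := by
    rcases Function.ne_iff.mp ha0 with ⟨i, hi⟩
    exact ⟨i, Finset.mem_filter.mpr ⟨Finset.mem_univ _, by simpa using hi⟩⟩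
  have hbne : (Finset.univ.filter fun i => b i ≠ 0).Nonempty := by
    rcases Function.ne_iff.mp hb0 with ⟨i, hi⟩
    exact ⟨i, Finset.mem_filter.mpr ⟨Finset.mem_univ _, by simpa using hi⟩⟩
  set m := (Finset.univ.filter fun i => a i ≠ 0).min' hane with hm
  set m' := (Finset.univ.filter fun i => b i ≠ 0).min' hbne with hm'
  have ham : a m ≠ 0 := by
    have := (Finset.univ.filter fun i => a i ≠ 0).min'_mem hane
    simpa using this
  have hbm : b m' ≠ 0 := by
    have := (Finset.univ.filter fun i => b i ≠ 0).min'_mem hbne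
    simpa using this
  have haz : ∀ k, k < m → a k = 0 := by
    intro k hk
    by_contra hk0
    exact absurd (Finset.min'_le _ k (by simp [hk0])) (not_le.mpr hk)
  have hbz : ∀ k, k < m' → b k = 0 := by
    intro k hk
    by_contra hk0
    exact absurd (Finset.min'_le _ k (by simp [hk0])) (not_le.mpr hk)
  -- x m = 2 * a m, y m' = 2 * b m'
  have hxm : x m = 2 * a m := by
    rw [ha m, Finset.sum_eq_single m]
    · rw [hdiag m]
    · intro k _ hk
      rcases lt_or_gt_of_ne hk with h | h
      · rw [haz k h, mul_zero]
      · rw [hupper m k h, zero_mul]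
    · simp
  have hym : y m' = 2 * b m' := by
    rw [hb m', Finset.sum_eq_single m']
    · rw [hdiag m']
    · intro k _ hk
      rcases lt_or_gt_of_ne hk with h | h
      · rw [hbz k h, mul_zero]
      · rw [hupper m' k h, zero_mul]
    · simp
  -- off-diagonal entries of column j are 0 or 1
  have hcol : ∀ i, i ≠ j → H i j = 0 ∨ H i j = 1 := by
    intro i hi
    rcases lt_or_gt_of_ne hi with h | h
    · exact Or.inl (hupper i j h)
    · exact hlow i j h
  -- each term with i ≠ j is nonpositive
  have hterm : ∀ i, i ≠ j → x i * y i ≤ 0 := by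
    intro i hi
    have hyi : y i = H i j - x i := by have := hxy i; linarith
    rcases hcol i hi with h | h <;> rw [hyi, h] <;> nlinarith [sq_nonneg (x i), sq_nonneg (x i - 1)]
  -- term at j is at most 1
  have htj : x j * y j ≤ 1 := by
    have hyj : y j = 2 - x j := by have := hxy j; rw [hdiag j] at this; linarith
    rw [hyj]; nlinarith [sq_nonneg (x j - 1)]
  -- the bad index: some i₀ with x i₀ * y i₀ ≤ -2
  have hbad : ∃ i₀, x i₀ * y i₀ ≤ -2 := by
    by_cases hmj : m = j
    · by_cases hmj' : m' = j
      · -- both minimal supports at j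
        refine ⟨j, ?_⟩
        have h1 : x j = 2 * a j := by rw [← hmj]; exact hxm
        have h2 : y j = 2 * b j := by rw [← hmj']; exact hym
        have h3 : x j + y j = 2 := by rw [hxy j, hdiag j]
        have hab : a j + b j = 1 := by omega
        have haj : a j ≠ 0 := by rw [← hmj]; exact ham
        have hbj : b j ≠ 0 := by rw [← hmj']; exact hbm
        have hab2 : a j * b j ≤ -2 := by
          rcases lt_or_gt_of_ne haj with h | h
          · have h1' : a j ≤ -1 := by omega
            have h2' : 2 ≤ b j := by omega
            nlinarith
          · have h1' : 2 ≤ a j := by omega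
            have h2' : b j ≤ -1 := by omega
            nlinarith
        have : x j * y j = 4 * (a j * b j) := by rw [h1, h2]; ring
        linarith
      · refine ⟨m', ?_⟩
        have hs := hcol m' hmj'
        have hxm' : x m' = H m' j - 2 * b m' := by have := hxy m'; rw [hym] at this; linarith
        rw [hxm', hym, mul_comm]
        exact int_key hs hbm
    · refine ⟨m, ?_⟩
      have hs := hcol m hmj
      have hym2 : y m = H m j - 2 * a m := by have := hxy m; rw [hxm] at this; linarith
      rw [hxm, hym2]
      exact int_key hs ham
  obtain ⟨i₀, hi₀⟩ := hbad
  -- derive contradiction: the sum is negative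
  have hlt : ∑ i, x i * y i < 0 := by
    rw [← Finset.add_sum_erase _ _ (Finset.mem_univ j)]
    by_cases hij : i₀ = j
    · have h1 : ∑ i ∈ Finset.univ.erase j, x i * y i ≤ 0 :=
        Finset.sum_nonpos fun i hi => hterm i (Finset.mem_erase.mp hi).1
      subst hij
      linarith
    · have hmem : i₀ ∈ Finset.univ.erase j := Finset.mem_erase.mpr ⟨hij, Finset.mem_univ _⟩
      rw [← Finset.add_sum_erase _ _ hmem]
      have h1 : ∑ i ∈ (Finset.univ.erase j).erase i₀, x i * y i ≤ 0 :=
        Finset.sum_nonpos fun i hi =>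
          hterm i (Finset.mem_erase.mp (Finset.mem_erase.mp hi).2).1
      linarith
  linarith
end

section
/- Let h_j and h_k be distinct columns of a Hajós matrix H with h_j · h_k = 0. Then h_j − h_k is rigid in Λ_H: it is simple, and its only decomposition as a sum of two nonzero orthogonal elements of Λ_H is h_j + (−h_k). -/
namespace HajosAux

variable {n : ℕ} {H : Matrix (Fin n) (Fin n) ℤ}

lemma int1 (a : ℤ) : -1 ≤ a * (a - 2) := by nlinarith [sq_nonneg (a - 1)]

lemma int2 (a : ℤ) : -1 ≤ a * (a + 2) := by nlinarith [sq_nonneg (a + 1)]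

lemma int3 (a : ℤ) (h : a ≠ 1) : 0 ≤ a * (a - 2) := by
  rcases le_or_gt a 0 with h' | h'
  · nlinarith
  · have : 2 ≤ a := by omega
    nlinarith

lemma int4 (a : ℤ) (h : a ≠ -1) : 0 ≤ a * (a + 2) := by
  rcases le_or_gt 0 a with h' | h'
  · nlinarith
  · have : a ≤ -2 := by omega
    nlinarith

lemma int5 (a : ℤ) (h : a * (a - 2) ≤ 1) : a = 0 ∨ a = 1 ∨ a = 2 := by
  have h1 : -6 ≤ 4 * (a - 1) := by nlinarith [sq_nonneg ((a - 1) + 2)]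
  have h2 : 4 * (a - 1) ≤ 6 := by nlinarith [sq_nonneg ((a - 1) - 2)]
  omega

lemma int6 (a : ℤ) (h : a * (a + 2) ≤ 1) : a = 0 ∨ a = -1 ∨ a = -2 := by
  have h1 : -6 ≤ 4 * (a + 1) := by nlinarith [sq_nonneg ((a + 1) + 2)]
  have h2 : 4 * (a + 1) ≤ 6 := by nlinarith [sq_nonneg ((a + 1) - 2)]
  omega

lemma int7 (a z : ℤ) (hz1 : -1 ≤ z) (hz2 : z ≤ 1) (h : a * (a - z) ≤ 1) :
    -1 ≤ a ∧ a ≤ 1 := by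
  have hb : (2 * a - z) ^ 2 ≤ 5 := by nlinarith
  have h1 : -14 ≤ 6 * (2 * a - z) := by nlinarith [sq_nonneg (2 * a - z + 3)]
  have h2 : 6 * (2 * a - z) ≤ 14 := by nlinarith [sq_nonneg (2 * a - z - 3)]
  omega

lemma int8 (a z : ℤ) (hz1 : -1 ≤ z) (hz2 : z ≤ 1) : 0 ≤ a * (a - z) := by
  rcases lt_trichotomy a 0 with h | h | h
  · have h1 : a ≤ -1 := by omega
    have h2 : a - z ≤ 0 := by omega
    nlinarith [mul_nonneg (show (0:ℤ) ≤ -a by omega) (show (0:ℤ) ≤ -(a - z) by omega)]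
  · simp [h]
  · exact mul_nonneg (by omega) (by omega)

lemma int9 (a : ℤ) (h : a * (a - 1) ≤ 1) : a = 0 ∨ a = 1 := by
  have h1 : -14 ≤ 6 * (2 * a - 1) := by nlinarith [sq_nonneg (2 * a - 1 + 3)]
  have h2 : 6 * (2 * a - 1) ≤ 14 := by nlinarith [sq_nonneg (2 * a - 1 - 3)]
  omega

lemma int10 (a : ℤ) (h : a * (a + 1) ≤ 1) : a = 0 ∨ a = -1 := by
  have h1 : -14 ≤ 6 * (2 * a + 1) := by nlinarith [sq_nonneg (2 * a + 1 + 3)]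
  have h2 : 6 * (2 * a + 1) ≤ 14 := by nlinarith [sq_nonneg (2 * a + 1 - 3)]
  omega


lemma sum_mul_single (H : Matrix (Fin n) (Fin n) ℤ) (i t0 : Fin n) (a : ℤ) :
    ∑ t, H i t * (Pi.single t0 a : Fin n → ℤ) t = H i t0 * a := by
  simp [Pi.single_apply, mul_ite]

lemma mem_hajos_iff {x : Fin n → ℤ} :
    x ∈ hajosLattice H ↔ ∃ c : Fin n → ℤ, ∀ i, x i = ∑ t, H i t * c t := by
  constructor
  · intro hx
    induction hx using AddSubgroup.closure_induction with
    | mem y hy =>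
      obtain ⟨t0, rfl⟩ := hy
      exact ⟨(Pi.single t0 1 : Fin n → ℤ), fun i => by rw [sum_mul_single]; ring⟩
    | zero => exact ⟨0, fun i => by simp⟩
    | add y z hy hz hy' hz' =>
      obtain ⟨c1, hc1⟩ := hy'
      obtain ⟨c2, hc2⟩ := hz'
      exact ⟨c1 + c2, fun i => by
        simp only [Pi.add_apply, hc1 i, hc2 i, mul_add, Finset.sum_add_distrib]⟩
    | neg y hy hy' =>
      obtain ⟨c1, hc1⟩ := hy'
      exact ⟨-c1, fun i => by
        simp only [Pi.neg_apply, hc1 i, mul_neg, Finset.sum_neg_distrib]⟩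
  · rintro ⟨c, hc⟩
    have hx : x = ∑ t, c t • (fun i => H i t) := by
      funext i
      rw [hc i]
      simp [Finset.sum_apply, mul_comm]
    rw [hx]
    exact AddSubgroup.sum_mem _ fun t _ =>
      AddSubgroup.zsmul_mem _ (AddSubgroup.subset_closure (Set.mem_range_self t)) _

lemma mulVec_two (hH : IsHajosMatrix H) (c : Fin n → ℤ) (i : Fin n)
    (h : ∀ t, t < i → c t = 0) : ∑ t, H i t * c t = 2 * c i := by
  rw [Finset.sum_eq_single i]
  · rw [hH.1 i]
  · intro t _ hti
    rcases lt_or_gt_of_ne hti with h' | h'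
    · rw [h t h', mul_zero]
    · rw [hH.2.1 i t h', zero_mul]
  · intro h; exact absurd (Finset.mem_univ i) h

lemma exists_min (c : Fin n → ℤ) (h : ∃ t, c t ≠ 0) :
    ∃ m, c m ≠ 0 ∧ ∀ t, t < m → c t = 0 := by
  obtain ⟨t0, ht0⟩ := h
  set S : Finset (Fin n) := Finset.univ.filter (fun t => c t ≠ 0) with hS
  have hne : S.Nonempty := ⟨t0, by simp [hS, ht0]⟩
  refine ⟨S.min' hne, (Finset.mem_filter.mp (S.min'_mem hne)).2, fun t ht => ?_⟩
  by_contra hc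
  exact absurd (S.min'_le t (by simp [hS, hc])) (not_le.mpr ht)

lemma small_eq_zero (hH : IsHajosMatrix H) (c : Fin n → ℤ)
    (hb : ∀ i, -1 ≤ (∑ t, H i t * c t) ∧ (∑ t, H i t * c t) ≤ 1) :
    ∀ i, (∑ t, H i t * c t) = 0 := by
  have hc : ∀ t, c t = 0 := by
    by_contra h
    push_neg at h
    obtain ⟨m, hm, hmin⟩ := exists_min c h
    have hx : ∑ t, H m t * c t = 2 * c m := mulVec_two hH c m hmin
    have := (hb m).1
    have := (hb m).2
    omega
  intro i
  exact Finset.sum_eq_zero fun t _ => by rw [hc t, mul_zero]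

lemma entry01 (hH : IsHajosMatrix H) (i t : Fin n) (h : i ≠ t) : H i t = 0 ∨ H i t = 1 := by
  rcases lt_or_gt_of_ne h with h' | h'
  · exact Or.inl (hH.2.1 i t h')
  · exact hH.2.2 i t h'

lemma entry_nonneg (hH : IsHajosMatrix H) (i t : Fin n) : 0 ≤ H i t := by
  rcases eq_or_ne i t with rfl | h
  · rw [hH.1 i]; norm_num
  · rcases entry01 hH i t h with h' | h' <;> omega

lemma central (hH : IsHajosMatrix H) (j k : Fin n) (hjk : j ≠ k)
    (horth : ∑ i, H i j * H i k = 0) (c x : Fin n → ℤ)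
    (hx : ∀ i, x i = ∑ t, H i t * c t)
    (hf : ∑ i, x i * (x i - (H i j - H i k)) ≤ 0) :
    (∀ i, x i = 0) ∨ (∀ i, x i = H i j - H i k) ∨
    (∀ i, x i = H i j) ∨ (∀ i, x i = - H i k) := by
  have hprod : ∀ i, H i j * H i k = 0 := fun i =>
    (Finset.sum_eq_zero_iff_of_nonneg (fun i _ =>
      mul_nonneg (entry_nonneg hH i j) (entry_nonneg hH i k))).mp horth i (Finset.mem_univ i)
  have hHjk : H j k = 0 := by have := hprod j; rw [hH.1 j] at this; omega
  have hHkj : H k j = 0 := by have := hprod k; rw [hH.1 k] at this; omega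
  have hzb : ∀ i, i ≠ j → i ≠ k → -1 ≤ H i j - H i k ∧ H i j - H i k ≤ 1 := by
    intro i h1 h2
    rcases entry01 hH i j h1 with h | h <;> rcases entry01 hH i k h2 with h' | h' <;> omega
  set G : Fin n → ℤ := fun i => x i * (x i - (H i j - H i k)) with hG
  have hGdef : ∀ i, G i = x i * (x i - (H i j - H i k)) := fun i => by rw [hG]
  have hGj : G j = x j * (x j - 2) := by rw [hGdef j, hH.1 j, hHjk]; ring
  have hGk : G k = x k * (x k + 2) := by rw [hGdef k, hH.1 k, hHkj]; ring
  have hGnn : ∀ i, i ≠ j → i ≠ k → 0 ≤ G i := fun i h1 h2 => by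
    rw [hGdef i]; exact int8 _ _ (hzb i h1 h2).1 (hzb i h1 h2).2
  have hmemsd : ∀ i, i ≠ j → i ≠ k → i ∈ Finset.univ \ ({j, k} : Finset (Fin n)) := by
    intro i h1 h2; simp [h1, h2]
  have hrest_nn : 0 ≤ ∑ i ∈ Finset.univ \ ({j, k} : Finset (Fin n)), G i := by
    refine Finset.sum_nonneg fun i hi => ?_
    simp only [Finset.mem_sdiff, Finset.mem_univ, true_and, Finset.mem_insert,
      Finset.mem_singleton, not_or] at hi
    exact hGnn i hi.1 hi.2
  have hsplit : ∑ i ∈ Finset.univ \ ({j, k} : Finset (Fin n)), G i + (G j + G k) = ∑ i, G i := by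
    rw [← Finset.sum_pair hjk]
    exact Finset.sum_sdiff (Finset.subset_univ _)
  have hbudget : ∀ m, m ≠ j → m ≠ k → G m ≤ -G j - G k := by
    intro m h1 h2
    have h3 : G m ≤ ∑ i ∈ Finset.univ \ ({j, k} : Finset (Fin n)), G i := by
      refine Finset.single_le_sum (fun i hi => ?_) (hmemsd m h1 h2)
      simp only [Finset.mem_sdiff, Finset.mem_univ, true_and, Finset.mem_insert,
        Finset.mem_singleton, not_or] at hi
      exact hGnn i hi.1 hi.2
    linarith
  have hoddj : x j = 1 → ∃ t, t < j ∧ c t ≠ 0 := by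
    intro h1; by_contra h; push_neg at h
    have h2 := mulVec_two hH c j h
    rw [← hx j] at h2; omega
  have hoddk : x k = -1 → ∃ t, t < k ∧ c t ≠ 0 := by
    intro h1; by_contra h; push_neg at h
    have h2 := mulVec_two hH c k h
    rw [← hx k] at h2; omega
  rcases eq_or_ne (x j) 1 with hxj1 | hxj1
  · rcases eq_or_ne (x k) (-1) with hxk1 | hxk1
    · -- Case 1 : x j = 1 and x k = -1 : impossible
      exfalso
      obtain ⟨t1, ht1⟩ := hoddj hxj1
      obtain ⟨t2, ht2⟩ := hoddk hxk1
      obtain ⟨m, hm, hmin⟩ := exists_min c ⟨t1, ht1.2⟩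
      have hmj : m < j := lt_of_le_of_lt (not_lt.mp fun h' => ht1.2 (hmin t1 h')) ht1.1
      have hmk : m < k := lt_of_le_of_lt (not_lt.mp fun h' => ht2.2 (hmin t2 h')) ht2.1
      have hxm : x m = 2 * c m := by rw [hx m]; exact mulVec_two hH c m hmin
      have hGm : G m = x m * x m := by rw [hGdef m, hH.2.1 m j hmj, hH.2.1 m k hmk]; ring
      have hcm : 1 ≤ c m * c m := by
        rcases lt_or_gt_of_ne hm with h | h <;> nlinarith
      have h4 : 4 ≤ G m := by rw [hGm, hxm]; nlinarith
      have hb := hbudget m (ne_of_lt hmj) (ne_of_lt hmk)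
      rw [hGj, hGk, hxj1, hxk1] at hb
      norm_num at hb
      linarith
    · -- Case 2 : x j = 1, x k ≠ -1 : impossible
      exfalso
      have hGjv : G j = -1 := by rw [hGj, hxj1]; ring
      have hGknn : 0 ≤ G k := by rw [hGk]; exact int4 _ hxk1
      have hGk1 : x k * (x k + 2) ≤ 1 := by rw [← hGk]; linarith
      have hxkv : x k = 0 ∨ x k = -2 := by
        rcases int6 (x k) hGk1 with h | h | h
        · exact Or.inl h
        · exact absurd h hxk1
        · exact Or.inr h
      obtain ⟨t1, ht1⟩ := hoddj hxj1
      obtain ⟨m, hm, hmin⟩ := exists_min c ⟨t1, ht1.2⟩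
      have hmj : m < j := lt_of_le_of_lt (not_lt.mp fun h' => ht1.2 (hmin t1 h')) ht1.1
      have hxm : x m = 2 * c m := by rw [hx m]; exact mulVec_two hH c m hmin
      rcases eq_or_ne m k with hmeq | hmk
      · have hmeq2 := hmeq.symm
        subst hmeq2
        have hxk2 : x k = -2 := by
          rcases hxkv with h | h
          · exact absurd (by omega : c k = 0) hm
          · exact h
        set c' : Fin n → ℤ := fun t => c t + (Pi.single k (1:ℤ) : Fin n → ℤ) t with hc'
        have hshift : ∀ i, ∑ t, H i t * c' t = x i + H i k := by
          intro i
          simp only [hc', mul_add, Finset.sum_add_distrib, sum_mul_single]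
          rw [← hx i]; ring
        have hbnd : ∀ i, -1 ≤ (∑ t, H i t * c' t) ∧ (∑ t, H i t * c' t) ≤ 1 := by
          intro i
          rw [hshift i]
          rcases eq_or_ne i j with rfl | hij
          · rw [hxj1, hHjk]; norm_num
          rcases eq_or_ne i k with rfl | hik
          · rw [hxk2, hH.1 i]; norm_num
          · have hGile : x i * (x i - (H i j - H i k)) ≤ 1 := by
              rw [← hGdef i]; linarith [hbudget i hij hik]
            rcases entry01 hH i k hik with h0 | h1
            · have := int7 _ _ (hzb i hij hik).1 (hzb i hij hik).2 hGile
              omega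
            · have hij0 : H i j = 0 := by have := hprod i; rw [h1] at this; omega
              have h2 : x i * (x i + 1) ≤ 1 := by
                rw [hij0, h1] at hGile
                linarith [hGile, (by ring : x i * (x i - ((0:ℤ) - 1)) = x i * (x i + 1))]
              rcases int10 _ h2 with h | h <;> omega
        have hz := small_eq_zero hH c' hbnd j
        rw [hshift j, hxj1, hHjk] at hz
        norm_num at hz
      · have hGm1 : x m * (x m - (H m j - H m k)) ≤ 1 := by
          rw [← hGdef m]; linarith [hbudget m (ne_of_lt hmj) hmk]
        have := int7 _ _ (hzb m (ne_of_lt hmj) hmk).1 (hzb m (ne_of_lt hmj) hmk).2 hGm1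
        omega
  · rcases eq_or_ne (x k) (-1) with hxk1 | hxk1
    · -- Case 3 : x j ≠ 1, x k = -1 : impossible
      exfalso
      have hGkv : G k = -1 := by rw [hGk, hxk1]; ring
      have hGjnn : 0 ≤ G j := by rw [hGj]; exact int3 _ hxj1
      have hGj1 : x j * (x j - 2) ≤ 1 := by rw [← hGj]; linarith
      have hxjv : x j = 0 ∨ x j = 2 := by
        rcases int5 (x j) hGj1 with h | h | h
        · exact Or.inl h
        · exact absurd h hxj1
        · exact Or.inr h
      obtain ⟨t1, ht1⟩ := hoddk hxk1
      obtain ⟨m, hm, hmin⟩ := exists_min c ⟨t1, ht1.2⟩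
      have hmk : m < k := lt_of_le_of_lt (not_lt.mp fun h' => ht1.2 (hmin t1 h')) ht1.1
      have hxm : x m = 2 * c m := by rw [hx m]; exact mulVec_two hH c m hmin
      rcases eq_or_ne m j with hmeq | hmj
      · have hmeq2 := hmeq.symm
        subst hmeq2
        have hxj2 : x j = 2 := by
          rcases hxjv with h | h
          · exact absurd (by omega : c j = 0) hm
          · exact h
        set c' : Fin n → ℤ := fun t => c t + (Pi.single j (-1:ℤ) : Fin n → ℤ) t with hc'
        have hshift : ∀ i, ∑ t, H i t * c' t = x i - H i j := by
          intro i
          simp only [hc', mul_add, Finset.sum_add_distrib, sum_mul_single]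
          rw [← hx i]; ring
        have hbnd : ∀ i, -1 ≤ (∑ t, H i t * c' t) ∧ (∑ t, H i t * c' t) ≤ 1 := by
          intro i
          rw [hshift i]
          rcases eq_or_ne i j with rfl | hij
          · rw [hxj2, hH.1 i]; norm_num
          rcases eq_or_ne i k with rfl | hik
          · rw [hxk1, hHkj]; norm_num
          · have hGile : x i * (x i - (H i j - H i k)) ≤ 1 := by
              rw [← hGdef i]; linarith [hbudget i hij hik]
            rcases entry01 hH i j hij with h0 | h1
            · have := int7 _ _ (hzb i hij hik).1 (hzb i hij hik).2 hGile
              omega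
            · have hik0 : H i k = 0 := by have := hprod i; rw [h1] at this; omega
              have h2 : x i * (x i - 1) ≤ 1 := by
                rw [hik0, h1] at hGile
                linarith [hGile, (by ring : x i * (x i - ((1:ℤ) - 0)) = x i * (x i - 1))]
              rcases int9 _ h2 with h | h <;> omega
        have hz := small_eq_zero hH c' hbnd k
        rw [hshift k, hxk1, hHkj] at hz
        norm_num at hz
      · have hGm1 : x m * (x m - (H m j - H m k)) ≤ 1 := by
          rw [← hGdef m]; linarith [hbudget m hmj (ne_of_lt hmk)]
        have := int7 _ _ (hzb m hmj (ne_of_lt hmk)).1 (hzb m hmj (ne_of_lt hmk)).2 hGm1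
        omega
    · -- Case 4 : x j ≠ 1, x k ≠ -1
      have hGjnn : 0 ≤ G j := by rw [hGj]; exact int3 _ hxj1
      have hGknn : 0 ≤ G k := by rw [hGk]; exact int4 _ hxk1
      have hallnn : ∀ i ∈ Finset.univ, 0 ≤ G i := by
        intro i _
        rcases eq_or_ne i j with rfl | hij
        · exact hGjnn
        rcases eq_or_ne i k with rfl | hik
        · exact hGknn
        exact hGnn i hij hik
      have hGzero : ∀ i, G i = 0 := fun i =>
        le_antisymm (le_trans (Finset.single_le_sum hallnn (Finset.mem_univ i)) hf)
          (hallnn i (Finset.mem_univ i))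
      have hxjv : x j = 0 ∨ x j = 2 := by
        have h0 : x j * (x j - 2) = 0 := by rw [← hGj]; exact hGzero j
        rcases mul_eq_zero.mp h0 with h | h
        · exact Or.inl h
        · exact Or.inr (by omega)
      have hxkv : x k = 0 ∨ x k = -2 := by
        have h0 : x k * (x k + 2) = 0 := by rw [← hGk]; exact hGzero k
        rcases mul_eq_zero.mp h0 with h | h
        · exact Or.inl h
        · exact Or.inr (by omega)
      have hxi : ∀ i, i ≠ j → i ≠ k → x i = 0 ∨ x i = H i j - H i k := by
        intro i h1 h2
        have h0 : x i * (x i - (H i j - H i k)) = 0 := by rw [← hGdef i]; exact hGzero i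
        rcases mul_eq_zero.mp h0 with h | h
        · exact Or.inl h
        · exact Or.inr (by omega)
      by_cases hc0 : ∀ t, c t = 0
      · exact Or.inl fun i => by
          rw [hx i]; exact Finset.sum_eq_zero fun t _ => by rw [hc0 t, mul_zero]
      push_neg at hc0
      obtain ⟨m, hm, hmin⟩ := exists_min c hc0
      have hxm : x m = 2 * c m := by rw [hx m]; exact mulVec_two hH c m hmin
      rcases eq_or_ne m j with hmeq | hmj
      · have hmeq2 := hmeq.symm
        subst hmeq2
        have hxj2 : x j = 2 := by
          rcases hxjv with h | h
          · exact absurd (by omega : c j = 0) hm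
          · exact h
        rcases hxkv with hxk0 | hxk2
        · -- x = h_j
          set c' : Fin n → ℤ := fun t => c t + (Pi.single j (-1:ℤ) : Fin n → ℤ) t with hc'
          have hshift : ∀ i, ∑ t, H i t * c' t = x i - H i j := by
            intro i
            simp only [hc', mul_add, Finset.sum_add_distrib, sum_mul_single]
            rw [← hx i]; ring
          have hbnd : ∀ i, -1 ≤ (∑ t, H i t * c' t) ∧ (∑ t, H i t * c' t) ≤ 1 := by
            intro i
            rw [hshift i]
            rcases eq_or_ne i j with rfl | hij
            · rw [hxj2, hH.1 i]; norm_num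
            rcases eq_or_ne i k with rfl | hik
            · rw [hxk0, hHkj]; norm_num
            · rcases hxi i hij hik with h | h <;>
                rcases entry01 hH i j hij with h' | h' <;>
                  rcases entry01 hH i k hik with h'' | h'' <;> omega
          have hfin := small_eq_zero hH c' hbnd
          refine Or.inr (Or.inr (Or.inl fun i => ?_))
          have := hfin i; rw [hshift i] at this; omega
        · -- x = z
          set c' : Fin n → ℤ := fun t => c t + (Pi.single j (-1:ℤ) : Fin n → ℤ) t + (Pi.single k (1:ℤ) : Fin n → ℤ) t with hc'
          have hshift : ∀ i, ∑ t, H i t * c' t = x i - H i j + H i k := by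
            intro i
            simp only [hc', mul_add, Finset.sum_add_distrib, sum_mul_single]
            rw [← hx i]; ring
          have hbnd : ∀ i, -1 ≤ (∑ t, H i t * c' t) ∧ (∑ t, H i t * c' t) ≤ 1 := by
            intro i
            rw [hshift i]
            rcases eq_or_ne i j with rfl | hij
            · rw [hxj2, hH.1 i, hHjk]; norm_num
            rcases eq_or_ne i k with rfl | hik
            · rw [hxk2, hHkj, hH.1 i]; norm_num
            · rcases hxi i hij hik with h | h <;>
                rcases entry01 hH i j hij with h' | h' <;>
                  rcases entry01 hH i k hik with h'' | h'' <;> omega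
          have hfin := small_eq_zero hH c' hbnd
          refine Or.inr (Or.inl fun i => ?_)
          have := hfin i; rw [hshift i] at this; omega
      rcases eq_or_ne m k with hmeq | hmk
      · have hmeq2 := hmeq.symm
        subst hmeq2
        have hxk2 : x k = -2 := by
          rcases hxkv with h | h
          · exact absurd (by omega : c k = 0) hm
          · exact h
        rcases hxjv with hxj0 | hxj2
        · -- x = -h_k
          set c' : Fin n → ℤ := fun t => c t + (Pi.single k (1:ℤ) : Fin n → ℤ) t with hc'
          have hshift : ∀ i, ∑ t, H i t * c' t = x i + H i k := by
            intro i
            simp only [hc', mul_add, Finset.sum_add_distrib, sum_mul_single]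
            rw [← hx i]; ring
          have hbnd : ∀ i, -1 ≤ (∑ t, H i t * c' t) ∧ (∑ t, H i t * c' t) ≤ 1 := by
            intro i
            rw [hshift i]
            rcases eq_or_ne i j with rfl | hij
            · rw [hxj0, hHjk]; norm_num
            rcases eq_or_ne i k with rfl | hik
            · rw [hxk2, hH.1 i]; norm_num
            · rcases hxi i hij hik with h | h <;>
                rcases entry01 hH i j hij with h' | h' <;>
                  rcases entry01 hH i k hik with h'' | h'' <;> omega
          have hfin := small_eq_zero hH c' hbnd
          refine Or.inr (Or.inr (Or.inr fun i => ?_))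
          have := hfin i; rw [hshift i] at this; omega
        · -- x = z
          set c' : Fin n → ℤ := fun t => c t + (Pi.single k (1:ℤ) : Fin n → ℤ) t + (Pi.single j (-1:ℤ) : Fin n → ℤ) t with hc'
          have hshift : ∀ i, ∑ t, H i t * c' t = x i + H i k - H i j := by
            intro i
            simp only [hc', mul_add, Finset.sum_add_distrib, sum_mul_single]
            rw [← hx i]; ring
          have hbnd : ∀ i, -1 ≤ (∑ t, H i t * c' t) ∧ (∑ t, H i t * c' t) ≤ 1 := by
            intro i
            rw [hshift i]
            rcases eq_or_ne i j with rfl | hij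
            · rw [hxj2, hHjk, hH.1 i]; norm_num
            rcases eq_or_ne i k with rfl | hik
            · rw [hxk2, hH.1 i, hHkj]; norm_num
            · rcases hxi i hij hik with h | h <;>
                rcases entry01 hH i j hij with h' | h' <;>
                  rcases entry01 hH i k hik with h'' | h'' <;> omega
          have hfin := small_eq_zero hH c' hbnd
          refine Or.inr (Or.inl fun i => ?_)
          have := hfin i; rw [hshift i] at this; omega
      · exfalso
        rcases hxi m hmj hmk with h | h
        · omega
        · have := hzb m hmj hmk; omega


end HajosAux

/-- Let `h_j`, `h_k` be distinct columns of a Hajós matrix `H` with `h_j · h_k = 0`.  Then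
`h_j − h_k` is rigid in `Λ_H`: it is simple (no decomposition into nonzero lattice elements
of positive pairing), and its only decomposition as a sum of two nonzero orthogonal elements
of `Λ_H` is `h_j + (−h_k)`. -/
theorem hajos_column_difference_rigid {n : ℕ} (H : Matrix (Fin n) (Fin n) ℤ)
    (hH : IsHajosMatrix H) (j k : Fin n) (hjk : j ≠ k)
    (horth : ∑ i, H i j * H i k = 0) :
    (∀ x y : Fin n → ℤ, x ∈ hajosLattice H → y ∈ hajosLattice H → x ≠ 0 → y ≠ 0 →
        x + y = (fun i => H i j - H i k) → ∑ i, x i * y i ≤ 0) ∧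
    (∀ x y : Fin n → ℤ, x ∈ hajosLattice H → y ∈ hajosLattice H → x ≠ 0 → y ≠ 0 →
        x + y = (fun i => H i j - H i k) → ∑ i, x i * y i = 0 →
        (x = (fun i => H i j) ∧ y = (fun i => -H i k)) ∨
        (x = (fun i => -H i k) ∧ y = (fun i => H i j))) := by
  have main : ∀ x y : Fin n → ℤ, x ∈ hajosLattice H →
      x + y = (fun i => H i j - H i k) →
      (∑ i, x i * y i ≤ 0 ∧ (∑ i, x i * y i = 0 →
        (∀ i, x i = 0) ∨ (∀ i, x i = H i j - H i k) ∨
        (∀ i, x i = H i j) ∨ (∀ i, x i = - H i k))) := by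
    intro x y hxmem hxy
    obtain ⟨c, hc⟩ := HajosAux.mem_hajos_iff.mp hxmem
    have hyi : ∀ i, y i = (H i j - H i k) - x i := by
      intro i
      have h1 := congrFun hxy i
      simp only [Pi.add_apply] at h1
      linarith
    have heq : ∑ i, x i * y i = -∑ i, x i * (x i - (H i j - H i k)) := by
      rw [← Finset.sum_neg_distrib]
      exact Finset.sum_congr rfl fun i _ => by rw [hyi i]; ring
    have hkey : 0 ≤ ∑ i, x i * (x i - (H i j - H i k)) := by
      by_contra hneg
      push_neg at hneg
      have hzero : ∑ i, x i * (x i - (H i j - H i k)) = 0 := by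
        rcases HajosAux.central hH j k hjk horth c x hc (le_of_lt hneg) with h | h | h | h
        · exact Finset.sum_eq_zero fun i _ => by rw [h i]; ring
        · exact Finset.sum_eq_zero fun i _ => by rw [h i]; ring
        · calc ∑ i, x i * (x i - (H i j - H i k)) = ∑ i, H i j * H i k :=
                Finset.sum_congr rfl fun i _ => by rw [h i]; ring
            _ = 0 := horth
        · calc ∑ i, x i * (x i - (H i j - H i k)) = ∑ i, H i j * H i k :=
                Finset.sum_congr rfl fun i _ => by rw [h i]; ring
            _ = 0 := horth
      linarith
    constructor
    · linarith
    · intro hdot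
      have hzero : ∑ i, x i * (x i - (H i j - H i k)) = 0 := by linarith
      exact HajosAux.central hH j k hjk horth c x hc (le_of_eq hzero)
  constructor
  · intro x y hxmem hymem hx0 hy0 hxy
    exact (main x y hxmem hxy).1
  · intro x y hxmem hymem hx0 hy0 hxy hdot
    have hyi : ∀ i, y i = (H i j - H i k) - x i := by
      intro i
      have h1 := congrFun hxy i
      simp only [Pi.add_apply] at h1
      linarith
    rcases (main x y hxmem hxy).2 hdot with h | h | h | h
    · exact absurd (by funext i; simpa using h i) hx0
    · exact absurd (by funext i; rw [hyi i, h i]; simp) hy0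
    · exact Or.inl ⟨funext fun i => h i, funext fun i => by rw [hyi i, h i]; ring⟩
    · exact Or.inr ⟨funext fun i => h i, funext fun i => by rw [hyi i, h i]; ring⟩
end

section
/- Let G be a finite graph with a fixed orientation, and regard C₁(G;ℤ) as the Euclidean lattice with the oriented edges as orthonormal basis. Then an element x of the flow lattice Flow(G) = ker(∂: C₁(G;ℤ) → C₀(G;ℤ)) is simple (i.e., admits no decomposition x = y + z with y, z ∈ Flow(G) nonzero and y · z > 0) if and only if |x · e| ≤ 1 for every edge e, i.e., x is the class of an oriented Eulerian subgraph of G. -/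
/-- `x : E → ℤ` is a flow on the oriented graph with edge-endpoint maps `src`, `tgt`:
it lies in the kernel of the boundary map `∂ : C₁(G;ℤ) → C₀(G;ℤ)`. -/
def IsFlow {V E : Type} [Fintype E] (src tgt : E → V) [DecidableEq V] (x : E → ℤ) : Prop :=
  ∀ v : V, ∑ e, x e * ((if tgt e = v then 1 else 0) - (if src e = v then 1 else 0)) = 0


section FlowAux
variable {V E : Type} [Fintype V] [Fintype E] [DecidableEq V]
set_option linter.unusedSectionVars false

/-- head of edge `e` in the orientation induced by the flow `x`. -/
def fhd (src tgt : E → V) (x : E → ℤ) (e : E) : V := if 0 < x e then tgt e else src e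
/-- tail of edge `e` in the orientation induced by the flow `x`. -/
def ftl (src tgt : E → V) (x : E → ℤ) (e : E) : V := if 0 < x e then src e else tgt e

lemma flow_sub {src tgt : E → V} {x y : E → ℤ} (hx : IsFlow src tgt x) (hy : IsFlow src tgt y) :
    IsFlow src tgt (fun e => x e - y e) := by
  intro v
  have := hx v
  have := hy v
  simp only [sub_mul]
  rw [Finset.sum_sub_distrib]
  omega

lemma conserve {src tgt : E → V} {x : E → ℤ} (hx : IsFlow src tgt x) (v : V) :
    ∑ e, |x e| * (if fhd src tgt x e = v then (1:ℤ) else 0)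
      = ∑ e, |x e| * (if ftl src tgt x e = v then (1:ℤ) else 0) := by
  have key : ∀ e, x e * ((if tgt e = v then (1:ℤ) else 0) - (if src e = v then 1 else 0))
      = |x e| * (if fhd src tgt x e = v then (1:ℤ) else 0)
        - |x e| * (if ftl src tgt x e = v then (1:ℤ) else 0) := by
    intro e
    unfold fhd ftl
    rcases lt_trichotomy (x e) 0 with h | h | h
    · simp only [if_neg (show ¬ 0 < x e by omega), abs_of_neg h]; ring
    · simp [h]
    · simp only [if_pos h, abs_of_pos h]; ring
  have h0 := hx v
  rw [Finset.sum_congr rfl (fun e _ => key e), Finset.sum_sub_distrib] at h0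
  omega

lemma succ_exists {src tgt : E → V} {x : E → ℤ} (hx : IsFlow src tgt x) (e : E) (he : x e ≠ 0) :
    ∃ e', x e' ≠ 0 ∧ ftl src tgt x e' = fhd src tgt x e := by
  classical
  set v := fhd src tgt x e with hv
  have hnn : ∀ e' : E, e' ∈ Finset.univ →
      (0:ℤ) ≤ |x e'| * (if fhd src tgt x e' = v then (1:ℤ) else 0) := by
    intro e' _
    have : (0:ℤ) ≤ (if fhd src tgt x e' = v then (1:ℤ) else 0) := by split <;> norm_num
    exact mul_nonneg (abs_nonneg _) this
  have h1 : (0:ℤ) < ∑ e', |x e'| * (if fhd src tgt x e' = v then (1:ℤ) else 0) := by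
    have hterm : (0:ℤ) < |x e| * (if fhd src tgt x e = v then (1:ℤ) else 0) := by
      rw [if_pos hv.symm, mul_one]
      exact abs_pos.2 he
    calc (0:ℤ) < |x e| * (if fhd src tgt x e = v then (1:ℤ) else 0) := hterm
      _ ≤ _ := Finset.single_le_sum hnn (Finset.mem_univ e)
  rw [conserve hx v] at h1
  obtain ⟨e', _, hne⟩ := Finset.exists_ne_zero_of_sum_ne_zero h1.ne'
  refine ⟨e', ?_, ?_⟩
  · intro h; apply hne; simp [h]
  · by_contra h; apply hne; rw [if_neg h, mul_zero]


lemma exists_conformal (src tgt : E → V) :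
    ∀ (x : E → ℤ), IsFlow src tgt x → ∀ e₀ : E, x e₀ ≠ 0 →
      ∃ y : E → ℤ, IsFlow src tgt y ∧ (∀ e, y e = 0 ∨ (|y e| = 1 ∧ 1 ≤ x e * y e)) ∧ y e₀ ≠ 0 := by
  classical
  suffices H : ∀ N : ℕ, ∀ x : E → ℤ, (∑ e, (x e).natAbs) = N → IsFlow src tgt x →
      ∀ e₀ : E, x e₀ ≠ 0 →
      ∃ y : E → ℤ, IsFlow src tgt y ∧ (∀ e, y e = 0 ∨ (|y e| = 1 ∧ 1 ≤ x e * y e)) ∧ y e₀ ≠ 0 by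
    exact fun x hx e₀ he₀ => H _ x rfl hx e₀ he₀
  intro N
  induction N using Nat.strong_induction_on with
  | _ N IH =>
  intro x hxN hx e₀ he₀
  -- the walk
  let g : {e : E // x e ≠ 0} → {e : E // x e ≠ 0} := fun e =>
    ⟨(succ_exists hx e.1 e.2).choose, (succ_exists hx e.1 e.2).choose_spec.1⟩
  let f : ℕ → E := fun n => (g^[n] ⟨e₀, he₀⟩).1
  have hfne : ∀ n, x (f n) ≠ 0 := fun n => (g^[n] ⟨e₀, he₀⟩).2
  have hfstep : ∀ n, ftl src tgt x (f (n+1)) = fhd src tgt x (f n) := by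
    intro n
    have h1 : f (n+1) = (g (g^[n] ⟨e₀, he₀⟩)).1 := by
      show (g^[n+1] ⟨e₀, he₀⟩).1 = _
      rw [Function.iterate_succ_apply']
    rw [h1]
    exact (succ_exists hx (g^[n] ⟨e₀, he₀⟩).1 (g^[n] ⟨e₀, he₀⟩).2).choose_spec.2
  -- pigeonhole
  set B := Fintype.card V with hB
  have hP : ∃ d, 0 < d ∧ ∃ i, i + d ≤ B ∧ fhd src tgt x (f i) = fhd src tgt x (f (i+d)) := by
    obtain ⟨a, b, hab, heq⟩ := Fintype.exists_ne_map_eq_of_card_lt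
      (fun a : Fin (B+1) => fhd src tgt x (f a.1)) (by simp [hB])
    have hab' : a.1 ≠ b.1 := fun h => hab (Fin.ext h)
    rcases Nat.lt_or_ge a.1 b.1 with h | h
    · exact ⟨b.1 - a.1, by omega, a.1, by have := b.2; omega,
        by rw [show a.1 + (b.1 - a.1) = b.1 by omega]; exact heq⟩
    · exact ⟨a.1 - b.1, by omega, b.1, by have := a.2; omega,
        by rw [show b.1 + (a.1 - b.1) = a.1 by omega]; exact heq.symm⟩
  set d := Nat.find hP with hd
  obtain ⟨hdpos, i, hiB, hcyc⟩ := Nat.find_spec hP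
  -- injectivity of f on the cycle indices
  set S := Finset.Ioc i (i + d) with hS
  have hinj : ∀ k ∈ S, ∀ l ∈ S, f k = f l → k = l := by
    intro k hk l hl hfkl
    simp only [hS, Finset.mem_Ioc] at hk hl
    by_contra hne
    have key : ∀ k l : ℕ, i < k → k < l → l ≤ i + d → f k = f l → False := by
      intro k l h1 h2 h3 hfe
      have : ¬ (0 < l - k ∧ ∃ j, j + (l - k) ≤ B ∧
          fhd src tgt x (f j) = fhd src tgt x (f (j + (l - k)))) :=
        Nat.find_min hP (by omega)
      exact this ⟨by omega, k, by omega, by rw [show k + (l - k) = l by omega, hfe]⟩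
    rcases Nat.lt_or_ge k l with h | h
    · exact key k l hk.1 h hl.2 hfkl
    · exact key l k hl.1 (by omega) hk.2 hfkl.symm
  -- the cycle circulation
  set y : E → ℤ := fun e => ∑ k ∈ S, if f k = e then Int.sign (x e) else 0 with hy
  have hycard : ∀ e, y e = ((S.filter (fun k => f k = e)).card : ℤ) * Int.sign (x e) := by
    intro e
    rw [hy]
    simp only
    rw [← Finset.sum_filter, Finset.sum_const, nsmul_eq_mul]
  have hcard1 : ∀ e, (S.filter (fun k => f k = e)).card ≤ 1 := by
    intro e
    refine Finset.card_le_one.2 ?_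
    intro a ha b hb
    simp only [Finset.mem_filter] at ha hb
    exact hinj a ha.1 b hb.1 (ha.2.trans hb.2.symm)
  have hymem : ∀ e, (∃ k ∈ S, f k = e) → (y e = Int.sign (x e) ∧ x e ≠ 0) := by
    intro e ⟨k, hk, hfk⟩
    have hxe : x e ≠ 0 := hfk ▸ hfne k
    have h1 : 1 ≤ (S.filter (fun k => f k = e)).card :=
      Finset.card_pos.2 ⟨k, Finset.mem_filter.2 ⟨hk, hfk⟩⟩
    have h2 : (S.filter (fun k => f k = e)).card = 1 := le_antisymm (hcard1 e) h1
    rw [hycard, h2]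
    simp [hxe]
  have hynot : ∀ e, (¬ ∃ k ∈ S, f k = e) → y e = 0 := by
    intro e hne
    have : S.filter (fun k => f k = e) = ∅ := by
      rw [Finset.filter_eq_empty_iff]
      intro k hk hfk
      exact hne ⟨k, hk, hfk⟩
    rw [hycard, this]
    simp
  have hyval : ∀ e, y e = 0 ∨ (y e = Int.sign (x e) ∧ x e ≠ 0) := by
    intro e
    by_cases h : ∃ k ∈ S, f k = e
    · exact Or.inr (hymem e h)
    · exact Or.inl (hynot e h)
  -- y is a flow
  have hyflow : IsFlow src tgt y := by
    intro v
    have step1 : ∀ e : E, y e * ((if tgt e = v then (1:ℤ) else 0) - (if src e = v then 1 else 0))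
        = ∑ k ∈ S, if f k = e then
            Int.sign (x e) * ((if tgt e = v then (1:ℤ) else 0) - (if src e = v then 1 else 0))
          else 0 := by
      intro e
      rw [hy]
      simp only
      rw [Finset.sum_mul]
      exact Finset.sum_congr rfl (fun k _ => by split <;> simp)
    rw [Finset.sum_congr rfl (fun e _ => step1 e), Finset.sum_comm]
    have step2 : ∀ k, (∑ e : E, if f k = e then
        Int.sign (x e) * ((if tgt e = v then (1:ℤ) else 0) - (if src e = v then 1 else 0)) else 0)
        = (if fhd src tgt x (f k) = v then (1:ℤ) else 0)
          - (if ftl src tgt x (f k) = v then (1:ℤ) else 0) := by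
      intro k
      rw [Finset.sum_ite_eq Finset.univ (f k)
        (fun e => Int.sign (x e) * ((if tgt e = v then (1:ℤ) else 0) - (if src e = v then 1 else 0))),
        if_pos (Finset.mem_univ _)]
      have hne := hfne k
      unfold fhd ftl
      rcases lt_trichotomy (x (f k)) 0 with h | h | h
      · rw [Int.sign_eq_neg_one_of_neg h]
        simp only [if_neg (show ¬ 0 < x (f k) by omega)]
        ring
      · exact absurd h hne
      · rw [Int.sign_eq_one_of_pos h]
        simp only [if_pos h]
        ring
    rw [Finset.sum_congr rfl (fun k _ => step2 k)]
    -- telescoping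
    have hconv : S = Finset.Ico (i+1) (i+d+1) := by
      rw [hS]
      ext k
      simp only [Finset.mem_Ioc, Finset.mem_Ico]
      omega
    rw [hconv, Finset.sum_Ico_eq_sum_range]
    have step3 : ∀ j, (if fhd src tgt x (f (i+1+j)) = v then (1:ℤ) else 0)
          - (if ftl src tgt x (f (i+1+j)) = v then (1:ℤ) else 0)
        = (if fhd src tgt x (f (i+(j+1))) = v then (1:ℤ) else 0)
          - (if fhd src tgt x (f (i+j)) = v then (1:ℤ) else 0) := by
      intro j
      rw [show i+1+j = (i+j)+1 by omega, hfstep (i+j), show i+(j+1) = i+j+1 by omega]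
    rw [show i+d+1 - (i+1) = d by omega,
      Finset.sum_congr rfl (fun j _ => step3 j),
      Finset.sum_range_sub (fun j => if fhd src tgt x (f (i+j)) = v then (1:ℤ) else 0) d]
    rw [show i + 0 = i by omega]
    rw [← hcyc]
    ring
  -- conformality of y with respect to x
  have hyconf : ∀ e, y e = 0 ∨ (|y e| = 1 ∧ 1 ≤ x e * y e) := by
    intro e
    rcases hyval e with h | ⟨h1, h2⟩
    · exact Or.inl h
    · refine Or.inr ⟨?_, ?_⟩
      · rw [h1]
        rcases lt_trichotomy (x e) 0 with h | h | h
        · rw [Int.sign_eq_neg_one_of_neg h]; norm_num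
        · exact absurd h h2
        · rw [Int.sign_eq_one_of_pos h]; norm_num
      · rw [h1, Int.mul_sign_self]
        have := Int.natAbs_pos.2 h2
        omega
  by_cases hcase : ∃ k ∈ S, f k = e₀
  · exact ⟨y, hyflow, hyconf, by
      obtain ⟨h1, h2⟩ := hymem e₀ hcase
      rw [h1]
      simpa using h2⟩
  · -- recurse on x - y
    have hy0 : y e₀ = 0 := hynot e₀ hcase
    set x' : E → ℤ := fun e => x e - y e with hx'
    have hx'app : ∀ e, x' e = x e - y e := fun _ => rfl
    have hx'flow : IsFlow src tgt x' := flow_sub hx hyflow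
    have hx'e₀ : x' e₀ ≠ 0 := by
      rw [hx'app e₀, hy0, sub_zero]
      exact he₀
    have hdec : ∀ e, (x' e).natAbs ≤ (x e).natAbs ∧ (y e ≠ 0 → (x' e).natAbs < (x e).natAbs) := by
      intro e
      rw [hx'app e]
      rcases hyval e with h | ⟨h1, h2⟩
      · simp [h]
      · rw [h1]
        rcases lt_trichotomy (x e) 0 with h | h | h
        · rw [Int.sign_eq_neg_one_of_neg h]; constructor <;> intros <;> omega
        · exact absurd h h2
        · rw [Int.sign_eq_one_of_pos h]; constructor <;> intros <;> omega
    have hstrict : y (f (i+1)) ≠ 0 := by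
      have hmem : i + 1 ∈ S := by rw [hS]; simp only [Finset.mem_Ioc]; omega
      obtain ⟨h1, h2⟩ := hymem (f (i+1)) ⟨i+1, hmem, rfl⟩
      rw [h1]
      simpa using h2
    have hlt : (∑ e, (x' e).natAbs) < N := by
      rw [← hxN]
      exact Finset.sum_lt_sum (fun e _ => (hdec e).1)
        ⟨f (i+1), Finset.mem_univ _, (hdec (f (i+1))).2 hstrict⟩
    obtain ⟨y', hy'flow, hy'conf, hy'e₀⟩ := IH _ hlt x' rfl hx'flow e₀ hx'e₀
    refine ⟨y', hy'flow, ?_, hy'e₀⟩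
    intro e
    rcases hy'conf e with h | ⟨h1, h2⟩
    · exact Or.inl h
    · refine Or.inr ⟨h1, ?_⟩
      have hx'e : x' e = x e - y e := hx'app e
      rcases hyval e with h | ⟨hys, hxne⟩
      · rw [hx'e, h, sub_zero] at h2
        exact h2
      · have hy'val : y' e = 1 ∨ y' e = -1 := by
          rcases abs_eq (by norm_num : (0:ℤ) ≤ 1) |>.mp h1 with h | h
          · exact Or.inl h
          · exact Or.inr h
        rw [hx'e, hys] at h2
        rcases lt_trichotomy (x e) 0 with h | h | h
        · rw [Int.sign_eq_neg_one_of_neg h] at h2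
          rcases hy'val with h' | h' <;> rw [h'] at h2 ⊢ <;> nlinarith
        · exact absurd h hxne
        · rw [Int.sign_eq_one_of_pos h] at h2
          rcases hy'val with h' | h' <;> rw [h'] at h2 ⊢ <;> nlinarith

end FlowAux

/-- An element `x` of the flow lattice `Flow(G)` is simple (it admits no decomposition
`x = y + z` with `y, z ∈ Flow(G)` nonzero and `y · z > 0`) if and only if `|x · e| ≤ 1` for
every edge `e`, i.e., `x` is the class of an oriented Eulerian subgraph of `G`. -/
theorem flow_simple_iff_eulerian {V E : Type} [Fintype V] [Fintype E] [DecidableEq V]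
    (src tgt : E → V) (x : E → ℤ) (hx : IsFlow src tgt x) :
    (∀ y z : E → ℤ, IsFlow src tgt y → IsFlow src tgt z → y ≠ 0 → z ≠ 0 →
        y + z = x → ∑ e, y e * z e ≤ 0) ↔ ∀ e, |x e| ≤ 1 := by

  classical
  constructor
  · intro H e₀
    by_contra hcon
    push_neg at hcon
    have hx0 : (1:ℤ) < x e₀ ∨ x e₀ < -1 := by
      rcases lt_abs.mp hcon with h | h
      · exact Or.inl h
      · exact Or.inr (by omega)
    have he₀ : x e₀ ≠ 0 := by omega
    obtain ⟨y, hyf, hyc, hy0⟩ := exists_conformal src tgt x hx e₀ he₀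
    set z : E → ℤ := fun e => x e - y e with hz
    have hzapp : ∀ e, z e = x e - y e := fun _ => rfl
    have hzf : IsFlow src tgt z := flow_sub hx hyf
    have hyval : ∀ e, y e = 0 ∨ y e = 1 ∨ y e = -1 := by
      intro e
      rcases hyc e with h | ⟨h1, _⟩
      · exact Or.inl h
      · rcases abs_eq (by norm_num : (0:ℤ) ≤ 1) |>.mp h1 with h | h
        · exact Or.inr (Or.inl h)
        · exact Or.inr (Or.inr h)
    have hyne : y ≠ 0 := fun h => hy0 (by rw [h]; rfl)
    have hy1 : |y e₀| = 1 ∧ 1 ≤ x e₀ * y e₀ := (hyc e₀).resolve_left hy0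
    have hzne : z ≠ 0 := by
      intro h
      have hze₀ : z e₀ = 0 := by rw [h]; rfl
      rw [hzapp e₀] at hze₀
      rcases hyval e₀ with h' | h' | h' <;> omega
    have hsum : y + z = x := by
      funext e
      simp [hzapp e]
    have hle := H y z hyf hzf hyne hzne hsum
    have hpos : (0:ℤ) < ∑ e, y e * z e := by
      apply Finset.sum_pos'
      · intro e _
        rw [hzapp e]
        rcases hyc e with h | ⟨h1, h2⟩
        · simp [h]
        · rcases hyval e with h' | h' | h' <;> rw [h'] at h2 ⊢ <;> nlinarith
      · refine ⟨e₀, Finset.mem_univ _, ?_⟩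
        rw [hzapp e₀]
        obtain ⟨h1, h2⟩ := hy1
        rcases hx0 with hx0 | hx0 <;>
          rcases hyval e₀ with h' | h' | h' <;> rw [h'] at h2 ⊢ <;> omega
    omega
  · intro H y z hyf hzf hyne hzne hsum
    apply Finset.sum_nonpos
    intro e _
    by_contra hpos
    push_neg at hpos
    have h1 : 1 ≤ y e * z e := hpos
    have h2 : |x e| ≤ 1 := H e
    have h3 : x e = y e + z e := by rw [← hsum]; rfl
    have h4 := abs_le.mp h2
    nlinarith [sq_nonneg (y e - z e), sq_nonneg (y e + z e)]
end

section
/- Suppose Λ₂ ⊆ Λ₁ ⊕ ℤⁿ is a finite-index sublattice such that every cube λ + x + {0,1}ⁿ with λ ∈ Λ₁ and x ∈ ℤⁿ contains exactly one point of Λ₂ (where the {0,1}ⁿ cube sits in the ℤⁿ factor). Then Λ₂ ∩ ({0} ⊕ ℤⁿ) is a 2-cube tiling lattice of ℤⁿ, and for every element λ of a fixed generating set of Λ₁ there is a unique x ∈ {0,1}ⁿ with λ + x ∈ Λ₂; moreover [Λ₁ ⊕ ℤⁿ : Λ₂] = 2ⁿ. -/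
/-- Suppose `Λ₁` is a lattice (a finitely generated free abelian group, here with rank
implicit; the pairing plays no role in the statement) and `Λ₂ ⊆ Λ₁ ⊕ ℤⁿ` is a sublattice
satisfying (★): every cube `λ + x + {0,1}ⁿ` with `λ ∈ Λ₁`, `x ∈ ℤⁿ` (the cube sitting in the
`ℤⁿ` factor) contains exactly one point of `Λ₂`.  Then:
(1) `Λ₂ ∩ ({0} ⊕ ℤⁿ)` is a 2-cube tiling lattice of `ℤⁿ`;
(2) for every `λ ∈ Λ₁` (in particular, for every element of a fixed generating set) there is
a unique `x ∈ {0,1}ⁿ` with `λ + x ∈ Λ₂`; and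
(3) `[Λ₁ ⊕ ℤⁿ : Λ₂] = 2ⁿ`. -/
theorem star_condition_consequences {A : Type} [AddCommGroup A]
    [Module.Free ℤ A] [Module.Finite ℤ A] {n : ℕ}
    (Λ₂ : AddSubgroup (A × (Fin n → ℤ)))
    (hstar : ∀ (lam : A) (x : Fin n → ℤ), ∃! p : A × (Fin n → ℤ),
        p ∈ Λ₂ ∧ p.1 = lam ∧ ∀ i, p.2 i = x i ∨ p.2 i = x i + 1) :
    (∀ x : Fin n → ℤ, ∃! y : Fin n → ℤ,
        ((0 : A), y) ∈ Λ₂ ∧ ∀ i, y i = x i ∨ y i = x i + 1) ∧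
    (∀ lam : A, ∃! x : Fin n → ℤ,
        (∀ i, x i = 0 ∨ x i = 1) ∧ (lam, x) ∈ Λ₂) ∧
    Λ₂.index = 2 ^ n := by
  -- key lemma: if (0, d) ∈ Λ₂ with all d i ∈ {-1,0,1}, then d = 0
  have key : ∀ d : Fin n → ℤ, ((0 : A), d) ∈ Λ₂ →
      (∀ i, d i = -1 ∨ d i = 0 ∨ d i = 1) → d = 0 := by
    intro d hd hdi
    set x : Fin n → ℤ := fun i => if d i = -1 then -1 else 0 with hx
    obtain ⟨p, -, hu⟩ := hstar 0 x
    have h1 : ((0 : A), d) = p := hu _ ⟨hd, rfl, by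
      intro i
      rcases hdi i with h | h | h
      · left; simp [hx, h]
      · left; simp [hx, h]
      · right; simp [hx, h]⟩
    have h2 : ((0 : A), (0 : Fin n → ℤ)) = p := hu _ ⟨Λ₂.zero_mem, rfl, by
      intro i
      by_cases h : d i = -1
      · right; simp [hx, h]
      · left; simp [hx, h]⟩
    have := h1.trans h2.symm
    exact congrArg Prod.snd this
  refine ⟨?_, ?_, ?_⟩
  · intro x
    obtain ⟨p, ⟨hp, hp1, hp2⟩, hu⟩ := hstar 0 x
    have hpe : p = ((0 : A), p.2) := Prod.ext hp1 rfl
    refine ⟨p.2, ⟨hpe ▸ hp, hp2⟩, ?_⟩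
    intro y ⟨hy, hy2⟩
    have := hu ((0 : A), y) ⟨hy, rfl, hy2⟩
    exact congrArg Prod.snd this
  · intro lam
    obtain ⟨p, ⟨hp, hp1, hp2⟩, hu⟩ := hstar lam 0
    have hpe : p = (lam, p.2) := Prod.ext hp1 rfl
    refine ⟨p.2, ⟨?_, hpe ▸ hp⟩, ?_⟩
    · intro i; simpa using hp2 i
    · intro y ⟨hy1, hy2⟩
      have := hu (lam, y) ⟨hy2, rfl, by intro i; simpa using hy1 i⟩
      exact congrArg Prod.snd this
  · -- index computation
    set f : (Fin n → Bool) → (A × (Fin n → ℤ)) ⧸ Λ₂ :=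
      fun b => QuotientAddGroup.mk ((0 : A), fun i => if b i then (-1 : ℤ) else 0) with hf
    have hbij : Function.Bijective f := by
      constructor
      · intro b b' hbb
        rw [hf] at hbb
        simp only [QuotientAddGroup.eq] at hbb
        have hbb' : ((0:A), (fun i => (if b' i then (-1:ℤ) else 0) - (if b i then (-1:ℤ) else 0))) ∈ Λ₂ := by
          convert hbb using 1
          refine Prod.ext (by simp) ?_
          funext i
          simp [sub_eq_neg_add]
        have hd := key _ hbb' ?_
        · funext i
          have := congrFun hd i
          by_cases hb : b i <;> by_cases hb' : b' i <;>
            simp_all [hb, hb']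
        · intro i
          by_cases hb : b i <;> by_cases hb' : b' i <;> simp [hb, hb']
      · intro q
        induction q using QuotientAddGroup.induction_on with
        | H z =>
          obtain ⟨a, x⟩ := z
          obtain ⟨p, ⟨hp, hp1, hp2⟩, -⟩ := hstar a x
          refine ⟨fun i => decide (p.2 i = x i + 1), ?_⟩
          rw [hf, QuotientAddGroup.eq]
          have : (-((0 : A), fun i => if decide (p.2 i = x i + 1) then (-1:ℤ) else 0) + (a, x)) = p := by
            refine Prod.ext (by simp [hp1]) ?_
            funext i
            rcases hp2 i with h | h
            · have hne : ¬ (p.2 i = x i + 1) := by omega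
              simp [hne, h]
            · simp [h]
              omega
          rw [this]
          exact hp
    have hcard : Nat.card ((A × (Fin n → ℤ)) ⧸ Λ₂) = 2 ^ n := by
      rw [← Nat.card_eq_of_bijective f hbij]
      simp [Nat.card_eq_fintype_card]
    exact hcard
end
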